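/- Let γ ∈ ℝ. The Jacobian matrix (3×3 matrix of partial derivatives) of the vector field G_γ at the equilibrium point P₁ = (0, 0, 0) is the diagonal matrix diag(3(γ − 1)/2, 3(γ − 2)/2, 3γ − 2); in particular its eigenvalues are 3(γ − 1)/2, 3(γ − 2)/2 and 3γ − 2, and, for γ ∈ [0, 2], all three eigenvalues are negative if and only if γ < 2/3. -/

import Mathlib

/-- The averaged Bianchi V guiding vector field `G_γ` in coordinates
`p = (Ω, Σ, K) = (p 0, p 1, p 2)`. -/
noncomputable def GBV (γ : ℝ) : (Fin 3 → ℝ) → (Fin 3 → ℝ) := fun p =>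
  ![-(1 / 2) * p 0 *
      (3 * γ * ((p 1) ^ 2 + (p 0) ^ 2 + p 2 - 1) - 6 * (p 1) ^ 2 - 3 * (p 0) ^ 2
        - 2 * p 2 + 3),
    (1 / 2) * p 1 *
      (-(3 * γ) * ((p 1) ^ 2 + (p 0) ^ 2 + p 2 - 1) + 6 * (p 1) ^ 2 + 3 * (p 0) ^ 2
        + 2 * p 2 - 6),
    -(p 2) *
      (3 * γ * ((p 1) ^ 2 + (p 0) ^ 2 + p 2 - 1) - 6 * (p 1) ^ 2 - 3 * (p 0) ^ 2
        - 2 * p 2 + 2)]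

/-- The Jacobian of `G_γ` at `P₁ = (0,0,0)` is `diag(3(γ-1)/2, 3(γ-2)/2, 3γ-2)`;
for `γ ∈ [0,2]` all three eigenvalues are negative iff `γ < 2/3`. -/
theorem bianchiV_jacobian_P1 (γ : ℝ) :
    HasFDerivAt (GBV γ)
      (LinearMap.toContinuousLinearMap
        (Matrix.toLin'
          (Matrix.diagonal ![3 * (γ - 1) / 2, 3 * (γ - 2) / 2, 3 * γ - 2])))
      ![0, 0, 0] ∧
    (0 ≤ γ ∧ γ ≤ 2 →
      ((3 * (γ - 1) / 2 < 0 ∧ 3 * (γ - 2) / 2 < 0 ∧ 3 * γ - 2 < 0) ↔ γ < 2 / 3)) := by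
  constructor
  · set x : Fin 3 → ℝ := ![0, 0, 0] with hx
    have hp : ∀ i : Fin 3, HasFDerivAt (fun p : Fin 3 → ℝ => p i)
        ((ContinuousLinearMap.proj i : (Fin 3 → ℝ) →L[ℝ] ℝ)) x := fun i => by
      exact (ContinuousLinearMap.proj i : (Fin 3 → ℝ) →L[ℝ] ℝ).hasFDerivAt
    have hQ : ∀ a b c d e : ℝ, HasFDerivAt
        (fun p : Fin 3 → ℝ =>
          a * (p 1 * p 1 + p 0 * p 0 + p 2 - 1) + b * (p 1 * p 1) + c * (p 0 * p 0)
            + d * p 2 + e)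
        ((a + d) • (ContinuousLinearMap.proj 2 : (Fin 3 → ℝ) →L[ℝ] ℝ)) x := by
      intro a b c d e
      have hsq1 := (hp 1).mul (hp 1)
      have hsq0 := (hp 0).mul (hp 0)
      have h := ((((((hsq1.add hsq0).add (hp 2)).sub_const 1).const_mul a).add
          (hsq1.const_mul b)).add (hsq0.const_mul c))
      have h2 := ((h.add ((hp 2).const_mul d)).add_const e)
      refine h2.congr_fderiv ?_
      apply ContinuousLinearMap.ext
      intro v
      have h1 : x 1 = 0 := rfl
      have h0 : x 0 = 0 := rfl
      simp [h0, h1]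
      ring
    rw [hasFDerivAt_pi']
    intro i
    have key : ∀ i : Fin 3,
        ((ContinuousLinearMap.proj i).comp
          (LinearMap.toContinuousLinearMap
            (Matrix.toLin'
              (Matrix.diagonal ![3 * (γ - 1) / 2, 3 * (γ - 2) / 2, 3 * γ - 2])))
          : (Fin 3 → ℝ) →L[ℝ] ℝ)
        = (![3 * (γ - 1) / 2, 3 * (γ - 2) / 2, 3 * γ - 2] i) •
            (ContinuousLinearMap.proj i) := by
      intro i
      apply ContinuousLinearMap.ext
      intro v
      simp [Matrix.toLin'_apply, Matrix.mulVec_diagonal]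
    fin_cases i
    · refine HasFDerivAt.congr_fderiv ?_ (key 0).symm
      have hf : HasFDerivAt (fun p : Fin 3 → ℝ => GBV γ p 0)
          ((3 * (γ - 1) / 2) • (ContinuousLinearMap.proj 0 : (Fin 3 → ℝ) →L[ℝ] ℝ)) x := by
        have hg := (hp 0).const_mul (-(1/2) : ℝ)
        have hq := hQ (3 * γ) (-6) (-3) (-2) 3
        refine HasFDerivAt.congr_fderiv
          (HasFDerivAt.congr_of_eventuallyEq (HasFDerivAt.mul (𝕜 := ℝ) hg hq)
            (Filter.Eventually.of_forall fun p => by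
              simp only [GBV, Matrix.cons_val_zero, Matrix.cons_val_one, Matrix.head_cons,
                Matrix.cons_val_two, Matrix.tail_cons, Pi.mul_apply]
              ring)) ?_
        apply ContinuousLinearMap.ext
        intro v
        have h0 : x 0 = 0 := rfl
        have h1 : x 1 = 0 := rfl
        have h2 : x 2 = 0 := rfl
        simp [h0, h1, h2]
        ring
      simpa using hf
    · refine HasFDerivAt.congr_fderiv ?_ (key 1).symm
      have hf : HasFDerivAt (fun p : Fin 3 → ℝ => GBV γ p 1)
          ((3 * (γ - 2) / 2) • (ContinuousLinearMap.proj 1 : (Fin 3 → ℝ) →L[ℝ] ℝ)) x := by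
        have hg := (hp 1).const_mul ((1/2) : ℝ)
        have hq := hQ (-(3 * γ)) 6 3 2 (-6)
        refine HasFDerivAt.congr_fderiv
          (HasFDerivAt.congr_of_eventuallyEq (HasFDerivAt.mul (𝕜 := ℝ) hg hq)
            (Filter.Eventually.of_forall fun p => by
              simp only [GBV, Matrix.cons_val_zero, Matrix.cons_val_one, Matrix.head_cons,
                Matrix.cons_val_two, Matrix.tail_cons, Pi.mul_apply]
              ring)) ?_
        apply ContinuousLinearMap.ext
        intro v
        have h0 : x 0 = 0 := rfl
        have h1 : x 1 = 0 := rfl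
        have h2 : x 2 = 0 := rfl
        simp [h0, h1, h2]
        ring
      simpa using hf
    · refine HasFDerivAt.congr_fderiv ?_ (key 2).symm
      have hf : HasFDerivAt (fun p : Fin 3 → ℝ => GBV γ p 2)
          ((3 * γ - 2) • (ContinuousLinearMap.proj 2 : (Fin 3 → ℝ) →L[ℝ] ℝ)) x := by
        have hg := (hp 2).const_mul ((-1 : ℝ))
        have hq := hQ (3 * γ) (-6) (-3) (-2) 2
        refine HasFDerivAt.congr_fderiv
          (HasFDerivAt.congr_of_eventuallyEq (HasFDerivAt.mul (𝕜 := ℝ) hg hq)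
            (Filter.Eventually.of_forall fun p => by
              simp only [GBV, Matrix.cons_val_zero, Matrix.cons_val_one, Matrix.head_cons,
                Matrix.cons_val_two, Matrix.tail_cons, Pi.mul_apply]
              ring)) ?_
        apply ContinuousLinearMap.ext
        intro v
        have h0 : x 0 = 0 := rfl
        have h1 : x 1 = 0 := rfl
        have h2 : x 2 = 0 := rfl
        simp [h0, h1, h2]
        ring
      simpa using hf
  · rintro ⟨h0, h2⟩
    constructor
    · rintro ⟨-, -, h⟩; linarith
    · intro h; exact ⟨by linarith, by linarith, by linarith⟩
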